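/- arXiv:1901.08924 — 2 statements merged into one kernel-verified Lean document; each statement's English description precedes it below -/
import Mathlib

section
/- Let f₁, …, f_n : ℝ^d → ℝ be differentiable and each L-smooth, f(x) = (1/n)∑_{j=1}^n f_j(x), and h : ℝ^d → ℝ convex, with P = f + h attaining its minimum at x*. Let Θ ≥ 0, η = ρ/L with 0 < ρ < 1/2, and suppose 8m²ρ²Θ + ρ ≤ 1. On a probability space, let random iterates be defined by: x̃⁰ = x⁰; for each epoch s = 0,…,S−1, x₀^{s+1} = x̃^s, and for t = 0,…,m−1, x_{t+1}^{s+1} = prox_{ηh}(x_t^{s+1} − η v_t^{s+1}) where the random gradient estimates satisfy E‖v_t^{s+1} − ∇f(x_t^{s+1})‖² ≤ 2L²Θ·E‖x_t^{s+1} − x̃^s‖² together with the expectation inequality E[P(x_{t+1}^{s+1})] ≤ E[P(x_t^{s+1}) + (η/2)‖v_t^{s+1} − ∇f(x_t^{s+1})‖² + (L − 1/(2η))‖x̄_{t+1}^{s+1} − x_t^{s+1}‖² + (L/2 − 1/(2η))‖x_{t+1}^{s+1} − x_t^{s+1}‖²], where x̄_{t+1}^{s+1} = prox_{ηh}(x_t^{s+1}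 − η∇f(x_t^{s+1})); and x̃^{s+1} = x_m^{s+1}. Then with T = Sm, (1/T)·∑_{s=0}^{S−1}∑_{t=0}^{m−1} E‖G_η(x_t^{s+1})‖² ≤ 2L(P(x⁰) − P(x*))/(ρ(1 − 2ρ)T). In particular, taking Θ = d·λ²/(4(2^{b−1}−1)²) + d_λ(1−λ)² + 1/(NB) gives the convergence guarantee of LPC-SVRG under communication schemes (a) and (b), and Θ = 3d·λ²/(8(2^{b−1}−1)²) + d_λ(1−λ)² + 1/(NB) gives the guarantee under scheme (c). -/
open MeasureTheory ProbabilityTheory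
open scoped ProbabilityTheory BigOperators RealInnerProductSpace
open Finset in
/-- Per-epoch recursion bound, abstracted to real sequences. -/
lemma lpc_epoch_aux (m : ℕ) (η L Θ ρ : ℝ)
    (hL : 0 < L) (hρ0 : 0 < ρ) (hρ : ρ < 1 / 2) (hη : η = ρ / L)
    (hcon : 8 * (m : ℝ) ^ 2 * ρ ^ 2 * Θ + ρ ≤ 1) (hΘ : 0 ≤ Θ)
    (A V B C D : ℕ → ℝ)
    (hCnn : ∀ t, 0 ≤ C t)
    (hstep : ∀ t < m, A (t + 1) ≤ A t + (η / 2) * V t + (L - 1 / (2 * η)) * B t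
      + (L / 2 - 1 / (2 * η)) * C t)
    (hvar : ∀ t < m, V t ≤ 2 * L ^ 2 * Θ * D t)
    (hD : ∀ t < m, D t ≤ (m : ℝ) * ∑ i ∈ Finset.range t, C i) :
    (L * (1 - 2 * ρ) / (2 * ρ)) * ∑ t ∈ Finset.range m, B t ≤ A 0 - A m := by
  have hη0 : 0 < η := by rw [hη]; positivity
  have hinv : 1 / (2 * η) = L / (2 * ρ) := by
    rw [hη]; field_simp
  -- telescoping
  have key : ∀ t ≤ m, A t ≤ A 0 + ∑ i ∈ Finset.range t,
      ((η / 2) * V i + (L - 1 / (2 * η)) * B i + (L / 2 - 1 / (2 * η)) * C i) := by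
    intro t
    induction t with
    | zero => simp
    | succ t ih =>
      intro h
      have ht : t < m := h
      have h1 := hstep t ht
      have h2 := ih ht.le
      rw [Finset.sum_range_succ]
      linarith
  have hAm := key m le_rfl
  -- bound the V-part
  have hVsum : (η / 2) * ∑ i ∈ Finset.range m, V i
      ≤ (η * L ^ 2 * Θ * (m : ℝ) ^ 2) * ∑ i ∈ Finset.range m, C i := by
    rw [Finset.mul_sum]
    calc ∑ i ∈ Finset.range m, (η / 2) * V i
        ≤ ∑ i ∈ Finset.range m, (η * L ^ 2 * Θ) * ((m : ℝ) * ∑ r ∈ Finset.range i, C r) := by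
          apply Finset.sum_le_sum
          intro i hi
          have hi' := Finset.mem_range.1 hi
          have hv := hvar i hi'
          have hd := hD i hi'
          have hDnn : 0 ≤ (m : ℝ) * ∑ r ∈ Finset.range i, C r := by
            have : 0 ≤ ∑ r ∈ Finset.range i, C r := Finset.sum_nonneg fun r _ => hCnn r
            positivity
          nlinarith [mul_le_mul_of_nonneg_left hd (by positivity : (0:ℝ) ≤ 2 * L ^ 2 * Θ)]
      _ ≤ ∑ i ∈ Finset.range m, (η * L ^ 2 * Θ) * ((m : ℝ) * ∑ r ∈ Finset.range m, C r) := by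
          apply Finset.sum_le_sum
          intro i hi
          have : ∑ r ∈ Finset.range i, C r ≤ ∑ r ∈ Finset.range m, C r :=
            Finset.sum_le_sum_of_subset_of_nonneg
              (Finset.range_subset_range.2 (Finset.mem_range.1 hi).le) (fun r _ _ => hCnn r)
          have h0 : (0:ℝ) ≤ η * L ^ 2 * Θ * (m : ℝ) := by positivity
          nlinarith
      _ = (η * L ^ 2 * Θ * (m : ℝ) ^ 2) * ∑ i ∈ Finset.range m, C i := by
          rw [Finset.sum_const, Finset.card_range]
          push_cast
          ring
  -- split the telescoped sum
  have hsplit : ∑ i ∈ Finset.range m,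
      ((η / 2) * V i + (L - 1 / (2 * η)) * B i + (L / 2 - 1 / (2 * η)) * C i)
      = (η / 2) * (∑ i ∈ Finset.range m, V i)
        + (L - 1 / (2 * η)) * ∑ i ∈ Finset.range m, B i
        + (L / 2 - 1 / (2 * η)) * ∑ i ∈ Finset.range m, C i := by
    rw [Finset.sum_add_distrib, Finset.sum_add_distrib, ← Finset.mul_sum, ← Finset.mul_sum,
      ← Finset.mul_sum]
  -- the C-coefficient is nonpositive
  have hCsumnn : 0 ≤ ∑ i ∈ Finset.range m, C i := Finset.sum_nonneg fun r _ => hCnn r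
  have hcoef : (η * L ^ 2 * Θ * (m : ℝ) ^ 2 + (L / 2 - 1 / (2 * η)))
      * ∑ i ∈ Finset.range m, C i ≤ 0 := by
    apply mul_nonpos_of_nonpos_of_nonneg _ hCsumnn
    have h8 : 2 * ρ ^ 2 * Θ * (m : ℝ) ^ 2 + ρ ≤ 1 := by
      nlinarith [mul_nonneg (mul_nonneg (sq_nonneg ρ) hΘ) (sq_nonneg (m : ℝ))]
    have heq : L / (2 * ρ) * (1 - ρ - 2 * ρ ^ 2 * Θ * (m : ℝ) ^ 2)
        = L / (2 * ρ) - (ρ * L * Θ * (m : ℝ) ^ 2 + L / 2) := by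
      field_simp
      ring
    have hpos : 0 ≤ L / (2 * ρ) * (1 - ρ - 2 * ρ ^ 2 * Θ * (m : ℝ) ^ 2) := by
      apply mul_nonneg (by positivity)
      linarith
    have hηL : η * L ^ 2 = ρ * L := by rw [hη]; field_simp
    rw [hinv, hηL]
    linarith [heq ▸ hpos]
  -- combine
  have hK : L * (1 - 2 * ρ) / (2 * ρ) = 1 / (2 * η) - L := by
    rw [hinv]; field_simp
  have := hVsum
  rw [hsplit] at hAm
  rw [hK]
  nlinarith [hAm, hVsum, hcoef]


/-- **Convergence of LPC-SVRG (Theorem 2).**  With step size `η = ρ/L`, `0 < ρ < 1/2`,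
parameter constraint `8m²ρ²Θ + ρ ≤ 1`, low-precision gradient estimates `v_t^{s+1}` whose
variance is bounded by `2L²Θ·E‖x_t^{s+1} - x̃^s‖²`, and the descent inequality of the smooth
step, the averaged squared gradient mapping of the iterates satisfies
`(1/T)∑_{s,t} E‖G_η(x_t^{s+1})‖² ≤ 2L(P(x⁰) - P(x*))/(ρ(1 - 2ρ)T)` where `T = Sm`.
Taking `Θ = dλ²/(4(2^{b-1}-1)²) + d_λ(1-λ)² + 1/(NB)` gives the guarantee under communication
schemes (a), (b); taking `Θ = 3dλ²/(8(2^{b-1}-1)²) + d_λ(1-λ)² + 1/(NB)` gives scheme (c). -/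
theorem lpc_svrg_convergence
    {Ω : Type*} [MeasureSpace Ω] [IsProbabilityMeasure (ℙ : Measure Ω)]
    {d n m S : ℕ} (hn : 0 < n) (hm : 0 < m) (hS : 0 < S)
    (L ρ η Θ : ℝ) (hL : 0 < L) (hΘ : 0 ≤ Θ)
    (hρ0 : 0 < ρ) (hρ : ρ < 1 / 2) (hη : η = ρ / L)
    (hconstraint : 8 * (m : ℝ) ^ 2 * ρ ^ 2 * Θ + ρ ≤ 1)
    (f : Fin n → EuclideanSpace ℝ (Fin d) → ℝ)
    (g : Fin n → EuclideanSpace ℝ (Fin d) → EuclideanSpace ℝ (Fin d))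
    (hgrad : ∀ j x, HasGradientAt (f j) (g j x) x)
    (hsmooth : ∀ j x y, ‖g j x - g j y‖ ≤ L * ‖x - y‖)
    (F : EuclideanSpace ℝ (Fin d) → ℝ) (hF : ∀ y, F y = (n : ℝ)⁻¹ * ∑ j, f j y)
    (gF : EuclideanSpace ℝ (Fin d) → EuclideanSpace ℝ (Fin d))
    (hgF : ∀ x, HasGradientAt F (gF x) x)
    (h : EuclideanSpace ℝ (Fin d) → ℝ) (hconvh : ConvexOn ℝ Set.univ h)
    (P : EuclideanSpace ℝ (Fin d) → ℝ) (hP : ∀ y, P y = F y + h y)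
    (xstar : EuclideanSpace ℝ (Fin d)) (hstar : ∀ y, P xstar ≤ P y)
    (x0 : EuclideanSpace ℝ (Fin d))
    -- iterates: `xt t s = x_t^{s+1}`, snapshots `xtil s = x̃^s`, gradient estimates `v t s`,
    -- and `xbar (t+1) s = prox_{ηh}(x_t^{s+1} - η ∇f(x_t^{s+1}))`
    (xt : ℕ → ℕ → Ω → EuclideanSpace ℝ (Fin d))
    (xtil : ℕ → Ω → EuclideanSpace ℝ (Fin d))
    (v : ℕ → ℕ → Ω → EuclideanSpace ℝ (Fin d))
    (xbar : ℕ → ℕ → Ω → EuclideanSpace ℝ (Fin d))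
    (hmeasx : ∀ t s, Measurable (xt t s)) (hmeasv : ∀ t s, Measurable (v t s))
    (hmeasxbar : ∀ t s, Measurable (xbar t s))
    (hxtil0 : ∀ ω, xtil 0 ω = x0)
    (hx0 : ∀ s < S, ∀ ω, xt 0 s ω = xtil s ω)
    (hxtilsucc : ∀ s < S, ∀ ω, xtil (s + 1) ω = xt m s ω)
    -- the proximal update `x_{t+1}^{s+1} = prox_{ηh}(x_t^{s+1} - η v_t^{s+1})`
    (hupdate : ∀ s < S, ∀ t < m, ∀ ω, IsMinOn
      (fun y => h y + (1 / (2 * η)) * ‖y - (xt t s ω - η • v t s ω)‖ ^ 2)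
      Set.univ (xt (t + 1) s ω))
    -- `x̄_{t+1}^{s+1} = prox_{ηh}(x_t^{s+1} - η ∇f(x_t^{s+1}))`
    (hxbar : ∀ s < S, ∀ t < m, ∀ ω, IsMinOn
      (fun y => h y + (1 / (2 * η)) * ‖y - (xt t s ω - η • gF (xt t s ω))‖ ^ 2)
      Set.univ (xbar (t + 1) s ω))
    -- integrability of all quantities appearing in the expectations
    (hintP : ∀ s < S, ∀ t ≤ m, Integrable fun ω => P (xt t s ω))
    (hintdist : ∀ s < S, ∀ t ≤ m, Integrable fun ω => ‖xt t s ω - xtil s ω‖ ^ 2)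
    (hintv : ∀ s < S, ∀ t < m, Integrable fun ω => ‖v t s ω - gF (xt t s ω)‖ ^ 2)
    (hintxbar : ∀ s < S, ∀ t < m, Integrable fun ω => ‖xbar (t + 1) s ω - xt t s ω‖ ^ 2)
    (hintstep : ∀ s < S, ∀ t < m, Integrable fun ω => ‖xt (t + 1) s ω - xt t s ω‖ ^ 2)
    -- the variance bound of the low-precision gradient estimates (Lemma 2)
    (hvar : ∀ s < S, ∀ t < m,
      ∫ ω, ‖v t s ω - gF (xt t s ω)‖ ^ 2 ≤ 2 * L ^ 2 * Θ * ∫ ω, ‖xt t s ω - xtil s ω‖ ^ 2)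
    -- the expected-descent inequality of the proximal gradient step
    (hdescent : ∀ s < S, ∀ t < m,
      (∫ ω, P (xt (t + 1) s ω)) ≤
        ∫ ω, (P (xt t s ω) + (η / 2) * ‖v t s ω - gF (xt t s ω)‖ ^ 2 +
          (L - 1 / (2 * η)) * ‖xbar (t + 1) s ω - xt t s ω‖ ^ 2 +
          (L / 2 - 1 / (2 * η)) * ‖xt (t + 1) s ω - xt t s ω‖ ^ 2)) :
    (1 / ((S : ℝ) * (m : ℝ))) *
        ∑ s ∈ Finset.range S, ∑ t ∈ Finset.range m,
          ∫ ω, ‖(1 / η) • (xt t s ω - xbar (t + 1) s ω)‖ ^ 2 ≤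
      2 * L * (P x0 - P xstar) / (ρ * (1 - 2 * ρ) * ((S : ℝ) * (m : ℝ))) := by
  have hη0 : 0 < η := by rw [hη]; positivity
  have hρ2 : 0 < 1 - 2 * ρ := by linarith
  -- per-epoch bound via the auxiliary lemma
  have hepoch : ∀ s < S, (L * (1 - 2 * ρ) / (2 * ρ)) *
      ∑ t ∈ Finset.range m, (∫ ω, ‖xbar (t + 1) s ω - xt t s ω‖ ^ 2)
      ≤ (∫ ω, P (xt 0 s ω)) - ∫ ω, P (xt m s ω) := by
    intro s hs
    apply lpc_epoch_aux m η L Θ ρ hL hρ0 hρ hη hconstraint hΘ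
      (fun t => ∫ ω, P (xt t s ω))
      (fun t => ∫ ω, ‖v t s ω - gF (xt t s ω)‖ ^ 2)
      (fun t => ∫ ω, ‖xbar (t + 1) s ω - xt t s ω‖ ^ 2)
      (fun t => ∫ ω, ‖xt (t + 1) s ω - xt t s ω‖ ^ 2)
      (fun t => ∫ ω, ‖xt t s ω - xtil s ω‖ ^ 2)
    · intro t
      exact integral_nonneg fun ω => by positivity
    · -- descent step in terms of the expectations
      intro t ht
      have hiP := hintP s hs t ht.le
      have hiV := (hintv s hs t ht).const_mul (η / 2)
      have hiB := (hintxbar s hs t ht).const_mul (L - 1 / (2 * η))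
      have hiC := (hintstep s hs t ht).const_mul (L / 2 - 1 / (2 * η))
      have e2 : Integrable (fun ω => P (xt t s ω)
          + (η / 2) * ‖v t s ω - gF (xt t s ω)‖ ^ 2) ℙ := hiP.add hiV
      have e1 : Integrable (fun ω => P (xt t s ω)
          + (η / 2) * ‖v t s ω - gF (xt t s ω)‖ ^ 2
          + (L - 1 / (2 * η)) * ‖xbar (t + 1) s ω - xt t s ω‖ ^ 2) ℙ := e2.add hiB
      calc (∫ ω, P (xt (t + 1) s ω)) ≤ _ := hdescent s hs t ht
        _ = _ := by
          rw [integral_add e1 hiC, integral_add e2 hiB,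
            integral_add hiP hiV, integral_const_mul, integral_const_mul, integral_const_mul]
    · intro t ht
      exact hvar s hs t ht
    · -- distance to the snapshot is controlled by the steps
      intro t ht
      have hpt : ∀ ω, ‖xt t s ω - xtil s ω‖ ^ 2
          ≤ (m : ℝ) * ∑ i ∈ Finset.range t, ‖xt (i + 1) s ω - xt i s ω‖ ^ 2 := by
        intro ω
        have hsum : ∑ i ∈ Finset.range t, (xt (i + 1) s ω - xt i s ω)
            = xt t s ω - xtil s ω := by
          rw [Finset.sum_range_sub (fun i => xt i s ω), hx0 s hs ω]
        have h1 : ‖xt t s ω - xtil s ω‖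
            ≤ ∑ i ∈ Finset.range t, ‖xt (i + 1) s ω - xt i s ω‖ := by
          rw [← hsum]; exact norm_sum_le _ _
        have h2 : (∑ i ∈ Finset.range t, ‖xt (i + 1) s ω - xt i s ω‖) ^ 2
            ≤ (t : ℝ) * ∑ i ∈ Finset.range t, ‖xt (i + 1) s ω - xt i s ω‖ ^ 2 := by
          simpa using
            sq_sum_le_card_mul_sum_sq (s := Finset.range t)
              (f := fun i => ‖xt (i + 1) s ω - xt i s ω‖)
        have hsq : ‖xt t s ω - xtil s ω‖ ^ 2
            ≤ (∑ i ∈ Finset.range t, ‖xt (i + 1) s ω - xt i s ω‖) ^ 2 :=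
          pow_le_pow_left₀ (norm_nonneg _) h1 2
        have hsnn : 0 ≤ ∑ i ∈ Finset.range t, ‖xt (i + 1) s ω - xt i s ω‖ ^ 2 :=
          Finset.sum_nonneg fun i _ => by positivity
        have htm : (t : ℝ) ≤ (m : ℝ) := Nat.cast_le.2 ht.le
        nlinarith
      have hintsum : Integrable fun ω =>
          (m : ℝ) * ∑ i ∈ Finset.range t, ‖xt (i + 1) s ω - xt i s ω‖ ^ 2 :=
        (integrable_finset_sum _ fun i hi =>
          hintstep s hs i ((Finset.mem_range.1 hi).trans ht)).const_mul _
      calc (∫ ω, ‖xt t s ω - xtil s ω‖ ^ 2)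
          ≤ ∫ ω, (m : ℝ) * ∑ i ∈ Finset.range t, ‖xt (i + 1) s ω - xt i s ω‖ ^ 2 :=
            integral_mono (hintdist s hs t ht.le) hintsum hpt
        _ = (m : ℝ) * ∑ i ∈ Finset.range t, ∫ ω, ‖xt (i + 1) s ω - xt i s ω‖ ^ 2 := by
            rw [integral_const_mul, integral_finset_sum _ fun i hi =>
              hintstep s hs i ((Finset.mem_range.1 hi).trans ht)]
  -- rewrite epoch endpoints in terms of the snapshots and telescope over epochs
  have hQ0 : ∀ s (hs : s < S), (∫ ω, P (xt 0 s ω)) = ∫ ω, P (xtil s ω) :=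
    fun s hs => integral_congr_ae (Filter.Eventually.of_forall fun ω => by simp only [hx0 s hs])
  have hQm : ∀ s (hs : s < S), (∫ ω, P (xt m s ω)) = ∫ ω, P (xtil (s + 1) ω) :=
    fun s hs => integral_congr_ae (Filter.Eventually.of_forall fun ω => by
      simp only [hxtilsucc s hs])
  have htel : (L * (1 - 2 * ρ) / (2 * ρ)) *
      ∑ s ∈ Finset.range S, ∑ t ∈ Finset.range m, (∫ ω, ‖xbar (t + 1) s ω - xt t s ω‖ ^ 2)
      ≤ (∫ ω, P (xtil 0 ω)) - ∫ ω, P (xtil S ω) := by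
    rw [Finset.mul_sum]
    calc ∑ s ∈ Finset.range S, (L * (1 - 2 * ρ) / (2 * ρ)) *
        ∑ t ∈ Finset.range m, (∫ ω, ‖xbar (t + 1) s ω - xt t s ω‖ ^ 2)
        ≤ ∑ s ∈ Finset.range S, ((∫ ω, P (xtil s ω)) - ∫ ω, P (xtil (s + 1) ω)) := by
          apply Finset.sum_le_sum
          intro s hs
          have hs' := Finset.mem_range.1 hs
          have := hepoch s hs'
          rw [hQ0 s hs', hQm s hs'] at this
          exact this
      _ = (∫ ω, P (xtil 0 ω)) - ∫ ω, P (xtil S ω) :=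
          Finset.sum_range_sub' (fun s => ∫ ω, P (xtil s ω)) S
  have hstart : (∫ ω, P (xtil 0 ω)) = P x0 := by
    simp only [hxtil0]
    simp
  have hSpred : S - 1 < S := Nat.sub_lt hS one_pos
  have hSint : Integrable fun ω => P (xtil S ω) := by
    have h' := hintP (S - 1) hSpred m le_rfl
    apply h'.congr
    filter_upwards with ω
    rw [← hxtilsucc (S - 1) hSpred ω, Nat.sub_add_cancel hS]
  have hend : P xstar ≤ ∫ ω, P (xtil S ω) := by
    calc P xstar = ∫ _ω, P xstar ∂(ℙ : Measure Ω) := by simp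
      _ ≤ ∫ ω, P (xtil S ω) := integral_mono (integrable_const _) hSint fun ω => hstar _
  -- main bound on the sum of B's
  set Bsum : ℝ := ∑ s ∈ Finset.range S, ∑ t ∈ Finset.range m,
    (∫ ω, ‖xbar (t + 1) s ω - xt t s ω‖ ^ 2) with hBsum
  have hBsumnn : 0 ≤ Bsum :=
    Finset.sum_nonneg fun s _ => Finset.sum_nonneg fun t _ =>
      integral_nonneg fun ω => by positivity
  have hKB : (L * (1 - 2 * ρ) / (2 * ρ)) * Bsum ≤ P x0 - P xstar := by
    rw [hBsum]
    calc (L * (1 - 2 * ρ) / (2 * ρ)) * _ ≤ (∫ ω, P (xtil 0 ω)) - ∫ ω, P (xtil S ω) := htel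
      _ ≤ P x0 - P xstar := by rw [hstart]; linarith
  -- rewrite the goal's integrand in terms of B
  have hG : ∀ s t, (∫ ω, ‖(1 / η) • (xt t s ω - xbar (t + 1) s ω)‖ ^ 2)
      = (1 / η) ^ 2 * ∫ ω, ‖xbar (t + 1) s ω - xt t s ω‖ ^ 2 := by
    intro s t
    rw [← integral_const_mul]
    apply integral_congr_ae
    filter_upwards with ω
    rw [norm_smul, ← norm_neg (xt t s ω - xbar (t + 1) s ω), neg_sub, mul_pow,
      Real.norm_eq_abs, sq_abs]
  have hgoal_eq : ∑ s ∈ Finset.range S, ∑ t ∈ Finset.range m,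
      (∫ ω, ‖(1 / η) • (xt t s ω - xbar (t + 1) s ω)‖ ^ 2) = (1 / η) ^ 2 * Bsum := by
    rw [hBsum, Finset.mul_sum]
    apply Finset.sum_congr rfl
    intro s _
    rw [Finset.mul_sum]
    exact Finset.sum_congr rfl fun t _ => hG s t
  rw [hgoal_eq]
  have hT : (0 : ℝ) < (S : ℝ) * (m : ℝ) := by positivity
  have hKey : (1 / η) ^ 2 * Bsum ≤ 2 * L * (P x0 - P xstar) / (ρ * (1 - 2 * ρ)) := by
    rw [le_div_iff₀ (by positivity : (0 : ℝ) < ρ * (1 - 2 * ρ))]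
    have h2 : (1 / η) ^ 2 * Bsum * (ρ * (1 - 2 * ρ))
        = 2 * L * ((L * (1 - 2 * ρ) / (2 * ρ)) * Bsum) := by
      rw [hη]
      field_simp
    rw [h2]
    have := mul_le_mul_of_nonneg_left hKB (by positivity : (0:ℝ) ≤ 2 * L)
    linarith
  calc (1 / ((S : ℝ) * (m : ℝ))) * ((1 / η) ^ 2 * Bsum)
      = ((1 / η) ^ 2 * Bsum) / ((S : ℝ) * (m : ℝ)) := by ring
    _ ≤ (2 * L * (P x0 - P xstar) / (ρ * (1 - 2 * ρ))) / ((S : ℝ) * (m : ℝ)) := by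
        gcongr
    _ = 2 * L * (P x0 - P xstar) / (ρ * (1 - 2 * ρ) * ((S : ℝ) * (m : ℝ))) := by
        rw [div_div]
end

section
/- Let d, m, N, B be positive integers and let b be an integer with (2^{b−1} − 1)² ≥ d. Set λ = 1 (so that no coordinate exceeds the quantization codebook and d_λ = 0). Then every ρ with 0 < ρ ≤ 1/(6m) satisfies ρ < 1/2 and the constraint 8m²ρ²·[d·λ²/(4(2^{b−1}−1)²) + d_λ(1−λ)² + 1/(NB)] + ρ ≤ 1. Consequently, b = O(log √d) bits and step size η = ρ/L = O(1/(mL)) suffice to satisfy the parameter constraint of the LPC-SVRG convergence theorem. -/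
/-- **Corollary 1.** If `(2^{b-1} - 1)² ≥ d` (i.e. `b = O(log √d)` bits) and `λ = 1`
(so that no coordinate is clipped and `d_λ = 0`), then every `ρ` with `0 < ρ ≤ 1/(6m)`
(i.e. step size `η = ρ/L = O(1/(mL))`) satisfies `ρ < 1/2` and the LPC-SVRG parameter
constraint `8m²ρ²[dλ²/(4(2^{b-1}-1)²) + d_λ(1-λ)² + 1/(NB)] + ρ ≤ 1`. -/
theorem lpc_svrg_parameter_constraint_satisfiable
    (d m N B : ℕ) (hd : 0 < d) (hm : 0 < m) (hN : 0 < N) (hB : 0 < B)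
    (b : ℕ) (hb : (d : ℝ) ≤ ((2 : ℝ) ^ (b - 1) - 1) ^ 2) :
    ∀ ρ : ℝ, 0 < ρ → ρ ≤ 1 / (6 * (m : ℝ)) →
      ρ < 1 / 2 ∧
        8 * (m : ℝ) ^ 2 * ρ ^ 2 *
            ((d : ℝ) * (1 : ℝ) ^ 2 / (4 * ((2 : ℝ) ^ (b - 1) - 1) ^ 2) +
              (0 : ℝ) * (1 - (1 : ℝ)) ^ 2 + 1 / ((N : ℝ) * (B : ℝ))) + ρ ≤ 1 := by
  intro ρ hρ hρle
  have hm1 : (1 : ℝ) ≤ (m : ℝ) := by exact_mod_cast hm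
  have hd1 : (1 : ℝ) ≤ (d : ℝ) := by exact_mod_cast hd
  have hNB : (1 : ℝ) ≤ (N : ℝ) * (B : ℝ) := by
    have := Nat.one_le_iff_ne_zero.mpr (Nat.mul_ne_zero hN.ne' hB.ne')
    exact_mod_cast this
  set s : ℝ := ((2 : ℝ) ^ (b - 1) - 1) ^ 2 with hs
  have hspos : 0 < s := lt_of_lt_of_le (by linarith) hb
  have h1 : (d : ℝ) * (1 : ℝ) ^ 2 / (4 * s) ≤ 1 / 4 := by
    rw [div_le_div_iff₀ (by positivity) (by norm_num)]
    nlinarith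
  have h2 : 1 / ((N : ℝ) * (B : ℝ)) ≤ 1 := by
    rw [div_le_one (by linarith)]; exact hNB
  have hρm : ρ * (m : ℝ) ≤ 1 / 6 := by
    have : 0 < 6 * (m : ℝ) := by linarith
    calc ρ * (m : ℝ) ≤ (1 / (6 * (m : ℝ))) * (m : ℝ) := by
          apply mul_le_mul_of_nonneg_right hρle (by linarith)
      _ = 1 / 6 := by field_simp
  have hρlt : ρ < 1 / 2 := by
    have : ρ ≤ 1 / 6 := by nlinarith
    linarith
  refine ⟨hρlt, ?_⟩
  have hbr : (d : ℝ) * (1 : ℝ) ^ 2 / (4 * s) + (0 : ℝ) * (1 - (1 : ℝ)) ^ 2 +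
      1 / ((N : ℝ) * (B : ℝ)) ≤ 5 / 4 := by linarith
  have hbr0 : 0 ≤ (d : ℝ) * (1 : ℝ) ^ 2 / (4 * s) + (0 : ℝ) * (1 - (1 : ℝ)) ^ 2 +
      1 / ((N : ℝ) * (B : ℝ)) := by positivity
  have hsq : 8 * (m : ℝ) ^ 2 * ρ ^ 2 ≤ 2 / 9 := by nlinarith [sq_nonneg (ρ * (m:ℝ)), mul_pos hρ (lt_of_lt_of_le one_pos hm1)]
  nlinarith [mul_le_mul hsq hbr hbr0 (by norm_num : (0:ℝ) ≤ 2/9)]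
end
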